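/- Let T be a Noetherian regular ring of prime characteristic p, let e ≥ 1, and assume T^{1/p^e} is a ∩-flat T-module. Then for every ideal A ⊆ T, the ideal Ã^(e) = ∩{L : L an ideal of T with A ⊆ L^{[p^e]}} itself satisfies A ⊆ (Ã^(e))^{[p^e]}; that is, Ã^(e) belongs to G^e(A) and is its unique minimal element. -/

import Mathlib

open IsLocalRing

/-- The `q`-th Frobenius power of an ideal: the ideal generated by `q`-th powers of elements. -/
def Ideal.frobPow {R : Type*} [CommSemiring R] (q : ℕ) (I : Ideal R) : Ideal R :=
  Ideal.span ((fun a => a ^ q) '' (I : Set R))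

/-- Regularity for a local ring: the maximal ideal is generated by `dim R` elements. -/
def IsRegularLocal (R : Type*) [CommRing R] [IsLocalRing R] : Prop :=
  ∃ (n : ℕ) (x : Fin n → R), maximalIdeal R = Ideal.span (Set.range x) ∧
    ringKrullDim R = n

/-- A regular (commutative Noetherian) ring: every localization at a prime is regular local. -/
def IsRegularRing' (T : Type*) [CommRing T] : Prop :=
  ∀ (P : Ideal T) [P.IsPrime], IsRegularLocal (Localization.AtPrime P)

/-- `T^{1/p^e}`: the ring `T` viewed as a module over itself by restriction of scalars
along the `e`-th iterate of the Frobenius endomorphism (`t • x = t^{p^e} * x`). -/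
def FrobTwist (T : Type*) (p e : ℕ) : Type _ := T

instance FrobTwist.instAddCommGroup {T : Type*} [CommRing T] {p e : ℕ} :
    AddCommGroup (FrobTwist T p e) :=
  inferInstanceAs (AddCommGroup T)

instance FrobTwist.instModule {T : Type*} [CommRing T] {p e : ℕ} [ExpChar T p] :
    Module T (FrobTwist T p e) :=
  Module.compHom T (iterateFrobenius T p e)

/-- A `∩`-flat module: flat, and tensoring commutes with arbitrary intersections of
submodules of finitely generated modules. -/
def IsInterFlat (T : Type u) [CommRing T] (M : Type v) [AddCommGroup M] [Module T M] : Prop :=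
  Module.Flat T M ∧
    ∀ (N : Type u) [AddCommGroup N] [Module T N], Module.Finite T N →
      ∀ 𝒮 : Set (Submodule T N),
        LinearMap.range (LinearMap.lTensor M (sInf 𝒮).subtype) =
          ⨅ P ∈ 𝒮, LinearMap.range (LinearMap.lTensor M (Submodule.subtype P))

/-- `Ã^{(e)}`: the intersection of all ideals `L` with `A ⊆ L^{[q]}` (`q = p^e`). -/
def Ideal.tilde {T : Type*} [CommSemiring T] (q : ℕ) (A : Ideal T) : Ideal T :=
  sInf { L : Ideal T | A ≤ Ideal.frobPow q L }


section aux
variable {T : Type u} [CommRing T] (p e : ℕ) [ExpChar T p]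

def FrobTwist.mk (x : T) : FrobTwist T p e := x
def FrobTwist.un (x : FrobTwist T p e) : T := x

@[simp] lemma FrobTwist.un_mk (x : T) : FrobTwist.un p e (FrobTwist.mk p e x) = x := rfl

lemma frobTwist_smul (t : T) (x : FrobTwist T p e) :
    t • x = FrobTwist.mk p e (t ^ p ^ e * FrobTwist.un p e x) := by
  show iterateFrobenius T p e t * FrobTwist.un p e x = _
  rw [iterateFrobenius_def]; rfl

lemma smul_top_mul_closed (I : Ideal T) (t : T) (z : FrobTwist T p e)
    (hz : z ∈ I • (⊤ : Submodule T (FrobTwist T p e))) :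
    FrobTwist.mk p e (t * FrobTwist.un p e z) ∈ I • (⊤ : Submodule T (FrobTwist T p e)) := by
  refine Submodule.smul_induction_on hz ?_ ?_
  · intro i hi n _
    have : FrobTwist.mk p e (t * FrobTwist.un p e (i • n))
        = i • FrobTwist.mk p e (t * FrobTwist.un p e n) := by
      rw [frobTwist_smul, frobTwist_smul]
      show FrobTwist.mk p e (t * (i ^ p ^ e * FrobTwist.un p e n)) = _
      rw [FrobTwist.un_mk]
      congr 1
      ring
    rw [this]
    exact Submodule.smul_mem_smul hi trivial
  · intro a b ha hb
    have : FrobTwist.mk p e (t * FrobTwist.un p e (a + b))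
        = FrobTwist.mk p e (t * FrobTwist.un p e a) + FrobTwist.mk p e (t * FrobTwist.un p e b) := by
      show FrobTwist.mk p e (t * (FrobTwist.un p e a + FrobTwist.un p e b)) = _
      show (t * (FrobTwist.un p e a + FrobTwist.un p e b) : T) = _
      ring_nf
      rfl
    rw [this]
    exact add_mem ha hb

/-- Membership in `I • ⊤ ⊆ FrobTwist` is membership in the Frobenius power. -/
lemma mem_smul_top_iff (I : Ideal T) (x : FrobTwist T p e) :
    x ∈ I • (⊤ : Submodule T (FrobTwist T p e)) ↔
      FrobTwist.un p e x ∈ Ideal.frobPow (p ^ e) I := by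
  constructor
  · intro hx
    refine Submodule.smul_induction_on hx ?_ ?_
    · intro i hi n _
      rw [frobTwist_smul]
      exact Ideal.mul_mem_right _ _ (Ideal.subset_span ⟨i, hi, rfl⟩)
    · intro a b ha hb
      exact add_mem ha hb
  · intro hx
    have := Submodule.span_induction (p := fun y _ =>
        FrobTwist.mk p e y ∈ I • (⊤ : Submodule T (FrobTwist T p e)))
      ?_ ?_ ?_ ?_ hx
    · exact this
    · rintro _ ⟨a, ha, rfl⟩
      have : FrobTwist.mk p e (a ^ p ^ e) = a • (FrobTwist.mk p e 1) := by
        rw [frobTwist_smul, FrobTwist.un_mk]; congr 1; ring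
      rw [this]
      exact Submodule.smul_mem_smul ha trivial
    · exact Submodule.zero_mem _
    · intro a b _ _ ha hb
      exact add_mem ha hb
    · intro t y _ hy
      exact smul_top_mul_closed p e I t (FrobTwist.mk p e y) hy

lemma range_rid_lTensor (I : Ideal T) :
    LinearMap.range ((TensorProduct.rid T (FrobTwist T p e)).toLinearMap ∘ₗ
      LinearMap.lTensor (FrobTwist T p e) (Submodule.subtype I)) =
    I • (⊤ : Submodule T (FrobTwist T p e)) := by
  apply le_antisymm
  · rintro _ ⟨w, rfl⟩
    induction w using TensorProduct.induction_on with
    | zero => simpa using Submodule.zero_mem _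
    | tmul m i =>
        simp only [LinearMap.comp_apply, LinearMap.lTensor_tmul, Submodule.coe_subtype,
          LinearEquiv.coe_coe, TensorProduct.rid_tmul]
        exact Submodule.smul_mem_smul i.2 trivial
    | add x y hx hy =>
        rw [map_add]
        exact add_mem hx hy
  · rw [Submodule.smul_le]
    intro i hi m _
    exact ⟨m ⊗ₜ ⟨i, hi⟩, by simp⟩

lemma mem_range_lTensor_iff (I : Ideal T) (x : T) :
    (TensorProduct.rid T (FrobTwist T p e)).symm (FrobTwist.mk p e x) ∈
      LinearMap.range (LinearMap.lTensor (FrobTwist T p e) (Submodule.subtype I)) ↔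
    x ∈ Ideal.frobPow (p ^ e) I := by
  rw [show LinearMap.range (LinearMap.lTensor (FrobTwist T p e) (Submodule.subtype I))
      = Submodule.comap (TensorProduct.rid T (FrobTwist T p e)).toLinearMap
        (I • (⊤ : Submodule T (FrobTwist T p e))) from ?_]
  · rw [Submodule.mem_comap]
    simp only [LinearEquiv.coe_coe, LinearEquiv.apply_symm_apply]
    rw [mem_smul_top_iff, FrobTwist.un_mk]
  · rw [← range_rid_lTensor p e I, LinearMap.range_comp]
    exact (Submodule.comap_map_eq_of_injective (LinearEquiv.injective _) _).symm

end aux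

/-- Let `T` be a Noetherian regular ring of prime characteristic `p`, let
`e ≥ 1`, and assume `T^{1/p^e}` is a `∩`-flat `T`-module.  Then for every ideal `A ⊆ T`,
the ideal `Ã^{(e)} = ⋂ {L | A ⊆ L^{[p^e]}}` itself satisfies `A ⊆ (Ã^{(e)})^{[p^e]}`;
that is, `Ã^{(e)}` belongs to `G^e(A)` and is its unique minimal element. -/
theorem stmt8 {T : Type u} [CommRing T] [IsNoetherianRing T]
    (p : ℕ) [Fact p.Prime] [CharP T p] (hreg : IsRegularRing' T)
    (e : ℕ) (he : 1 ≤ e) (hflat : IsInterFlat T (FrobTwist T p e))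
    (A : Ideal T) :
    IsLeast { L : Ideal T | A ≤ Ideal.frobPow (p ^ e) L } (Ideal.tilde (p ^ e) A) := by
  haveI : ExpChar T p := ExpChar.prime Fact.out
  constructor
  · show A ≤ Ideal.frobPow (p ^ e) (Ideal.tilde (p ^ e) A)
    intro a ha
    set 𝒮 : Set (Submodule T T) := { L : Ideal T | A ≤ Ideal.frobPow (p ^ e) L } with h𝒮
    have h := hflat.2 T inferInstance 𝒮
    show a ∈ Ideal.frobPow (p ^ e) (sInf 𝒮)
    rw [← mem_range_lTensor_iff p e (sInf 𝒮) a, h, Submodule.mem_iInf]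
    intro P
    rw [Submodule.mem_iInf]
    intro hP
    exact (mem_range_lTensor_iff p e P a).2 (hP ha)
  · intro L hL
    exact sInf_le hL
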